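/- In ℚ(x_1,x_2,x_3), the following identity of the t-coefficients holds: in the expansion of ∑_{σ∈S_3} σ( ∏_{i<j} f(t(x_i−x_j)) / ∏_{i<j}(x_i−x_j) ) as a power series in t with f(t) = 1 + ∑_{i≥1} a_i t^i, the coefficients of t^0, t^1 and t^2 all vanish. -/

import Mathlib

open Equiv

set_option maxHeartbeats 1000000

private lemma anti1 : Finset.HasAntidiagonal.antidiagonal 1 = ({(0,1),(1,0)} : Finset (ℕ × ℕ)) := by decide
private lemma anti2 : Finset.HasAntidiagonal.antidiagonal 2 = ({(0,2),(1,1),(2,0)} : Finset (ℕ × ℕ)) := by decide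

private lemma aux_c0 {F : Type*} [Field F] (a : ℕ → F) (v c1 c2 c3 : F) :
    PowerSeries.coeff 0 (PowerSeries.C v *
      ((PowerSeries.mk fun m => if m = 0 then (1:F) else a m * c1 ^ m) *
       (PowerSeries.mk fun m => if m = 0 then (1:F) else a m * c2 ^ m) *
       (PowerSeries.mk fun m => if m = 0 then (1:F) else a m * c3 ^ m))) = v := by
  simp [PowerSeries.coeff_mul]

private lemma aux_c1 {F : Type*} [Field F] (a : ℕ → F) (v c1 c2 c3 : F) :
    PowerSeries.coeff 1 (PowerSeries.C v *
      ((PowerSeries.mk fun m => if m = 0 then (1:F) else a m * c1 ^ m) *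
       (PowerSeries.mk fun m => if m = 0 then (1:F) else a m * c2 ^ m) *
       (PowerSeries.mk fun m => if m = 0 then (1:F) else a m * c3 ^ m))) =
    v * (a 1 * c1 + a 1 * c2 + a 1 * c3) := by
  simp (config := { decide := true }) [PowerSeries.coeff_mul, anti1, anti2, Finset.sum_insert, PowerSeries.coeff_C]
  exact Or.inl (by ring)

private lemma aux_c2 {F : Type*} [Field F] (a : ℕ → F) (v c1 c2 c3 : F) :
    PowerSeries.coeff 2 (PowerSeries.C v *
      ((PowerSeries.mk fun m => if m = 0 then (1:F) else a m * c1 ^ m) *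
       (PowerSeries.mk fun m => if m = 0 then (1:F) else a m * c2 ^ m) *
       (PowerSeries.mk fun m => if m = 0 then (1:F) else a m * c3 ^ m))) =
    v * (a 2 * c1 ^ 2 + a 2 * c2 ^ 2 + a 2 * c3 ^ 2 +
      a 1 * c1 * (a 1 * c2) + a 1 * c1 * (a 1 * c3) + a 1 * c2 * (a 1 * c3)) := by
  simp (config := { decide := true }) [PowerSeries.coeff_mul, anti1, anti2, Finset.sum_insert, PowerSeries.coeff_C]
  exact Or.inl (by ring)

/-- for the flag manifold `U(3)/T³`, in the expansion of
`∑_{σ∈S₃} σ( ∏_{i<j} f(t(x_i−x_j)) / ∏_{i<j}(x_i−x_j) )` as a power series in `t`,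
with `f(t) = 1 + ∑_{i≥1} a_i tⁱ` a formal series with constant term `1`, the
coefficients of `t⁰`, `t¹` and `t²` all vanish (for all distinct values of the `x_i`
and all values of the formal coefficients `a_i`). -/
theorem flag_U3_low_coefficients_vanish {F : Type*} [Field F] [CharZero F]
    (x : Fin 3 → F) (hx : Function.Injective x) (a : ℕ → F) :
    (let f : F → PowerSeries F := fun c =>
      PowerSeries.mk fun m => if m = 0 then 1 else a m * c ^ m
    ∀ m : ℕ, m < 3 →
      PowerSeries.coeff m
        (∑ σ : Perm (Fin 3),
          PowerSeries.C (((x (σ 0) - x (σ 1)) * (x (σ 0) - x (σ 2)) * (x (σ 1) - x (σ 2)))⁻¹) *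
            (f (x (σ 0) - x (σ 1)) * f (x (σ 0) - x (σ 2)) * f (x (σ 1) - x (σ 2)))) = 0) := by
  intro f m hm
  have h : ∀ i j : Fin 3, i ≠ j → x i - x j ≠ 0 := fun i j hij =>
    sub_ne_zero.mpr (fun e => hij (hx e))
  have h01 := h 0 1 (by decide)
  have h02 := h 0 2 (by decide)
  have h12 := h 1 2 (by decide)
  have h10 := h 1 0 (by decide)
  have h20 := h 2 0 (by decide)
  have h21 := h 2 1 (by decide)
  rw [show (Finset.univ : Finset (Perm (Fin 3))) = {1, Equiv.swap 0 1, Equiv.swap 0 2,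
      Equiv.swap 1 2, Equiv.swap 0 1 * Equiv.swap 1 2, Equiv.swap 0 2 * Equiv.swap 1 2}
    from by decide]
  rw [Finset.sum_insert (by decide), Finset.sum_insert (by decide),
    Finset.sum_insert (by decide), Finset.sum_insert (by decide),
    Finset.sum_insert (by decide), Finset.sum_singleton]
  simp only [map_add, Perm.mul_apply, Perm.one_apply,
    show ((Equiv.swap 0 1 : Perm (Fin 3)) 0) = 1 from by decide,
    show ((Equiv.swap 0 1 : Perm (Fin 3)) 1) = 0 from by decide,
    show ((Equiv.swap 0 1 : Perm (Fin 3)) 2) = 2 from by decide,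
    show ((Equiv.swap 0 2 : Perm (Fin 3)) 0) = 2 from by decide,
    show ((Equiv.swap 0 2 : Perm (Fin 3)) 1) = 1 from by decide,
    show ((Equiv.swap 0 2 : Perm (Fin 3)) 2) = 0 from by decide,
    show ((Equiv.swap 1 2 : Perm (Fin 3)) 0) = 0 from by decide,
    show ((Equiv.swap 1 2 : Perm (Fin 3)) 1) = 2 from by decide,
    show ((Equiv.swap 1 2 : Perm (Fin 3)) 2) = 1 from by decide]
  simp only [f]
  rw [show ((x 1 - x 0) * (x 1 - x 2) * (x 0 - x 2)) =
        -((x 0 - x 1) * (x 0 - x 2) * (x 1 - x 2)) from by ring,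
    show ((x 2 - x 1) * (x 2 - x 0) * (x 1 - x 0)) =
        -((x 0 - x 1) * (x 0 - x 2) * (x 1 - x 2)) from by ring,
    show ((x 0 - x 2) * (x 0 - x 1) * (x 2 - x 1)) =
        -((x 0 - x 1) * (x 0 - x 2) * (x 1 - x 2)) from by ring,
    show ((x 1 - x 2) * (x 1 - x 0) * (x 2 - x 0)) =
        ((x 0 - x 1) * (x 0 - x 2) * (x 1 - x 2)) from by ring,
    show ((x 2 - x 0) * (x 2 - x 1) * (x 0 - x 1)) =
        ((x 0 - x 1) * (x 0 - x 2) * (x 1 - x 2)) from by ring,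
    inv_neg]
  interval_cases m
  · simp only [aux_c0]
    ring
  · simp only [aux_c1]
    ring
  · simp only [aux_c2]
    ring
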